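/- (SDP dual certificate.) Let A : S_n(ℝ) → ℝ^m be linear with adjoint A^*, b ∈ ℝ^m, C ∈ S_n(ℝ), and let X0 ∈ S_n(ℝ) satisfy A(X0) = b and X0 ⪰ 0, with r0 = rank(X0). Suppose there exist g1 ∈ ℝ^m and C1 ∈ S_n(ℝ) such that C = A^*(g1) + C1, C1·X0 = 0, C1 ⪰ 0, and rank(C1) = n − r0. Then X0 is a minimizer of Tr(CX) over E_SDP = { X ∈ S_n(ℝ) : A(X) = b, X ⪰ 0 }, and every minimizer X satisfies C1·X = 0, i.e. Range(X) ⊆ Range(X0). In particular, if the restriction of A to the subspace { X ∈ S_n(ℝ) : Range(X) ⊆ Range(X0) } is injective, then X0 is the unique minimizer. -/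

import Mathlib

open Matrix

section SqrtCompat
open scoped MatrixOrder

noncomputable def Matrix.PosSemidef.sqrt {n : ℕ} {P : Matrix (Fin n) (Fin n) ℝ}
    (_ : P.PosSemidef) : Matrix (Fin n) (Fin n) ℝ := CFC.sqrt P

lemma Matrix.PosSemidef.sqrt_mul_self {n : ℕ} {P : Matrix (Fin n) (Fin n) ℝ}
    (hP : P.PosSemidef) : hP.sqrt * hP.sqrt = P :=
  CFC.sqrt_mul_sqrt_self P hP.nonneg

lemma Matrix.PosSemidef.posSemidef_sqrt {n : ℕ} {P : Matrix (Fin n) (Fin n) ℝ}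
    (hP : P.PosSemidef) : hP.sqrt.PosSemidef :=
  (CFC.sqrt_nonneg P).posSemidef

end SqrtCompat

private lemma trace_transpose_mul_self_nonneg {n : ℕ} (A : Matrix (Fin n) (Fin n) ℝ) :
    0 ≤ Matrix.trace (Aᵀ * A) := by
  have h : Matrix.trace (Aᵀ * A) = ∑ j, ∑ i, A i j ^ 2 := by
    simp [Matrix.trace, Matrix.mul_apply, Matrix.diag, sq]
  rw [h]
  positivity

private lemma eq_zero_of_trace_transpose_mul_self {n : ℕ} {A : Matrix (Fin n) (Fin n) ℝ}
    (h : Matrix.trace (Aᵀ * A) = 0) : A = 0 := by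
  have h' : Matrix.trace (Aᵀ * A) = ∑ j, ∑ i, A i j ^ 2 := by
    simp [Matrix.trace, Matrix.mul_apply, Matrix.diag, sq]
  rw [h'] at h
  ext i j
  have h1 := (Finset.sum_eq_zero_iff_of_nonneg (fun j _ => Finset.sum_nonneg
    (fun i _ => sq_nonneg (A i j)))).mp h j (Finset.mem_univ j)
  have h2 := (Finset.sum_eq_zero_iff_of_nonneg (fun i _ => sq_nonneg (A i j))).mp h1 i
    (Finset.mem_univ i)
  simpa using sq_eq_zero_iff.mp h2

private lemma trace_psd_mul_eq {n : ℕ} {P Q : Matrix (Fin n) (Fin n) ℝ}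
    (hP : P.PosSemidef) (hQ : Q.PosSemidef) :
    Matrix.trace (P * Q) =
      Matrix.trace ((hQ.sqrt * hP.sqrt)ᵀ * (hQ.sqrt * hP.sqrt)) := by
  set S := hP.sqrt with hSdef
  set T := hQ.sqrt with hTdef
  have hS : S * S = P := hP.sqrt_mul_self
  have hT : T * T = Q := hQ.sqrt_mul_self
  have hSh : Sᵀ = S := by
    have := hP.posSemidef_sqrt.isHermitian
    rwa [Matrix.IsHermitian, conjTranspose_eq_transpose_of_trivial] at this
  have hTh : Tᵀ = T := by
    have := hQ.posSemidef_sqrt.isHermitian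
    rwa [Matrix.IsHermitian, conjTranspose_eq_transpose_of_trivial] at this
  have h1 : (T * S)ᵀ * (T * S) = S * (T * (T * S)) := by
    rw [Matrix.transpose_mul, hSh, hTh, Matrix.mul_assoc]
  rw [h1, Matrix.trace_mul_comm S (T * (T * S)), ← hS, ← hT,
    Matrix.trace_mul_comm (S * S) (T * T)]
  simp only [Matrix.mul_assoc]

private lemma psd_mul_eq_zero_of_trace {n : ℕ} {P Q : Matrix (Fin n) (Fin n) ℝ}
    (hP : P.PosSemidef) (hQ : Q.PosSemidef) (h : Matrix.trace (P * Q) = 0) : P * Q = 0 := by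
  rw [trace_psd_mul_eq hP hQ] at h
  have hTS : hQ.sqrt * hP.sqrt = 0 := eq_zero_of_trace_transpose_mul_self h
  have hST : hP.sqrt * hQ.sqrt = 0 := by
    have hSh : (hP.sqrt)ᵀ = hP.sqrt := by
      have := hP.posSemidef_sqrt.isHermitian
      rwa [Matrix.IsHermitian, conjTranspose_eq_transpose_of_trivial] at this
    have hTh : (hQ.sqrt)ᵀ = hQ.sqrt := by
      have := hQ.posSemidef_sqrt.isHermitian
      rwa [Matrix.IsHermitian, conjTranspose_eq_transpose_of_trivial] at this
    calc hP.sqrt * hQ.sqrt = (hQ.sqrt * hP.sqrt)ᵀ := by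
          rw [Matrix.transpose_mul, hSh, hTh]
      _ = 0 := by rw [hTS]; simp
  calc P * Q = (hP.sqrt * hP.sqrt) * (hQ.sqrt * hQ.sqrt) := by
        rw [hP.sqrt_mul_self, hQ.sqrt_mul_self]
    _ = hP.sqrt * (hP.sqrt * hQ.sqrt) * hQ.sqrt := by simp only [Matrix.mul_assoc]
    _ = 0 := by rw [hST]; simp

private lemma psd_isSymm {n : ℕ} {X : Matrix (Fin n) (Fin n) ℝ} (h : X.PosSemidef) :
    X.IsSymm := by
  have := h.isHermitian
  rwa [Matrix.IsHermitian, conjTranspose_eq_transpose_of_trivial] at this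

/-- SDP dual certificate.  If `C = A^*(g1) + C1` with
`C1 X0 = 0`, `C1 ⪰ 0` and `rank C1 = n - r0`, then `X0` minimizes `Tr(C X)`
over `E_SDP`, every minimizer `X` satisfies `C1 X = 0`, i.e. has range
contained in the range of `X0`, and if `A` is injective on the symmetric
matrices with range contained in `Range X0`, then `X0` is the unique
minimizer. -/
theorem sdp_dual_certificate
    (n m : ℕ)
    (𝒜 : Matrix (Fin n) (Fin n) ℝ →ₗ[ℝ] (Fin m → ℝ)) (b : Fin m → ℝ)
    (𝒜ad : (Fin m → ℝ) →ₗ[ℝ] Matrix (Fin n) (Fin n) ℝ)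
    (had_symm : ∀ g, (𝒜ad g).IsSymm)
    (hadj : ∀ (X : Matrix (Fin n) (Fin n) ℝ) (g : Fin m → ℝ), X.IsSymm →
      ∑ i, 𝒜 X i * g i = Matrix.trace (𝒜ad g * X))
    (C X0 : Matrix (Fin n) (Fin n) ℝ)
    (hX0feas : 𝒜 X0 = b) (hX0psd : X0.PosSemidef)
    (r0 : ℕ) (hr0 : X0.rank = r0)
    (g1 : Fin m → ℝ) (C1 : Matrix (Fin n) (Fin n) ℝ)
    (hC : C = 𝒜ad g1 + C1)
    (hC1X0 : C1 * X0 = 0) (hC1psd : C1.PosSemidef) (hC1rank : C1.rank = n - r0) :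
    (∀ X : Matrix (Fin n) (Fin n) ℝ, 𝒜 X = b → X.PosSemidef →
        Matrix.trace (C * X0) ≤ Matrix.trace (C * X)) ∧
    (∀ X : Matrix (Fin n) (Fin n) ℝ, 𝒜 X = b → X.PosSemidef →
        Matrix.trace (C * X) ≤ Matrix.trace (C * X0) →
        C1 * X = 0 ∧ LinearMap.range X.mulVecLin ≤ LinearMap.range X0.mulVecLin) ∧
    ((∀ X : Matrix (Fin n) (Fin n) ℝ, X.IsSymm →
        LinearMap.range X.mulVecLin ≤ LinearMap.range X0.mulVecLin → 𝒜 X = 0 → X = 0) →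
      ∀ X : Matrix (Fin n) (Fin n) ℝ, 𝒜 X = b → X.PosSemidef →
        Matrix.trace (C * X) ≤ Matrix.trace (C * X0) → X = X0) := by
  -- value of objective on feasible points
  have hval : ∀ X : Matrix (Fin n) (Fin n) ℝ, 𝒜 X = b → X.PosSemidef →
      Matrix.trace (C * X) = (∑ i, b i * g1 i) + Matrix.trace (C1 * X) := by
    intro X hfeas hpsd
    have hsymm : X.IsSymm := psd_isSymm hpsd
    have := hadj X g1 hsymm
    rw [hC, Matrix.add_mul, Matrix.trace_add, ← this, hfeas]
  -- trace (C * X0)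
  have hvalX0 : Matrix.trace (C * X0) = ∑ i, b i * g1 i := by
    rw [hval X0 hX0feas hX0psd, hC1X0]
    simp
  -- range X0 = ker C1
  have hXle : LinearMap.range X0.mulVecLin ≤ LinearMap.ker C1.mulVecLin := by
    rintro v ⟨u, rfl⟩
    show C1.mulVec (X0.mulVec u) = 0
    rw [Matrix.mulVec_mulVec, hC1X0, Matrix.zero_mulVec]
  have hr0le : r0 ≤ n := by
    have := X0.rank_le_card_width
    simp only [Fintype.card_fin] at this
    omega
  have hdim : Module.finrank ℝ (LinearMap.ker C1.mulVecLin) = r0 := by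
    have h1 := LinearMap.finrank_range_add_finrank_ker C1.mulVecLin
    have h2 : Module.finrank ℝ ↥(LinearMap.range C1.mulVecLin) = n - r0 := by
      rw [← hC1rank]; rfl
    simp only [Module.finrank_pi, Fintype.card_fin] at h1
    omega
  have hkerEq : LinearMap.range X0.mulVecLin = LinearMap.ker C1.mulVecLin := by
    apply Submodule.eq_of_le_of_finrank_le hXle
    rw [hdim]
    have : Module.finrank ℝ ↥(LinearMap.range X0.mulVecLin) = r0 := by
      rw [← hr0]; rfl
    omega
  -- part 2 core
  have hpart2 : ∀ X : Matrix (Fin n) (Fin n) ℝ, 𝒜 X = b → X.PosSemidef →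
      Matrix.trace (C * X) ≤ Matrix.trace (C * X0) →
      C1 * X = 0 ∧ LinearMap.range X.mulVecLin ≤ LinearMap.range X0.mulVecLin := by
    intro X hfeas hpsd hle
    have htr : Matrix.trace (C1 * X) = 0 := by
      have h1 := hval X hfeas hpsd
      have h2 : (0:ℝ) ≤ Matrix.trace (C1 * X) := by
        rw [trace_psd_mul_eq hC1psd hpsd]
        exact trace_transpose_mul_self_nonneg _
      rw [hvalX0, h1] at hle
      linarith
    have hzero : C1 * X = 0 := psd_mul_eq_zero_of_trace hC1psd hpsd htr
    refine ⟨hzero, ?_⟩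
    rw [hkerEq]
    rintro v ⟨u, rfl⟩
    show C1.mulVec (X.mulVec u) = 0
    rw [Matrix.mulVec_mulVec, hzero, Matrix.zero_mulVec]
  refine ⟨?_, hpart2, ?_⟩
  · intro X hfeas hpsd
    rw [hval X hfeas hpsd, hvalX0]
    have h2 : (0:ℝ) ≤ Matrix.trace (C1 * X) := by
      rw [trace_psd_mul_eq hC1psd hpsd]
      exact trace_transpose_mul_self_nonneg _
    linarith
  · intro hinj X hfeas hpsd hle
    obtain ⟨hzero, hrange⟩ := hpart2 X hfeas hpsd hle
    have hs : (X - X0).IsSymm := (psd_isSymm hpsd).sub (psd_isSymm hX0psd)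
    have hr : LinearMap.range (X - X0).mulVecLin ≤ LinearMap.range X0.mulVecLin := by
      rintro v ⟨u, rfl⟩
      show (X - X0).mulVec u ∈ _
      rw [Matrix.sub_mulVec]
      exact Submodule.sub_mem _ (hrange ⟨u, rfl⟩) ⟨u, rfl⟩
    have hA0 : 𝒜 (X - X0) = 0 := by
      rw [map_sub, hfeas, hX0feas, sub_self]
    have := hinj (X - X0) hs hr hA0
    exact sub_eq_zero.mp this
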